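/- Over the field with two elements, the n×n matrix (n ≥ 2) given by the block diagonal matrix [[1,1],[1,0]] ⊕ I_{n−2} cannot be written as a sum of two diagonalizable matrices. -/
import Mathlib

/-- `M` is diagonalizable over `D`: similar over `D` to a diagonal matrix. -/
def IsDiagonalizable {D : Type*} [DivisionRing D] {ι : Type*} [Fintype ι] [DecidableEq ι]
    (M : Matrix ι ι D) : Prop :=
  ∃ P Q : Matrix ι ι D, P * Q = 1 ∧ Q * P = 1 ∧ ∃ d : ι → D, Q * M * P = Matrix.diagonal d

lemma add_self_mat {ι : Type*} [Fintype ι] (X : Matrix ι ι (ZMod 2)) : X + X = 0 := by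
  ext i j
  simp [CharTwo.add_self_eq_zero]

lemma diag_idem {ι : Type*} [Fintype ι] [DecidableEq ι] {M : Matrix ι ι (ZMod 2)}
    (h : IsDiagonalizable M) : M * M = M := by
  obtain ⟨P, Q, hPQ, hQP, d, hd⟩ := h
  have hM : M = P * Matrix.diagonal d * Q := by
    calc M = (P * Q) * M * (P * Q) := by rw [hPQ]; simp
    _ = P * (Q * M * P) * Q := by noncomm_ring
    _ = P * Matrix.diagonal d * Q := by rw [hd]
  have hdd : Matrix.diagonal d * Matrix.diagonal d = Matrix.diagonal d := by
    rw [Matrix.diagonal_mul_diagonal]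
    have hfun : (fun i => d i * d i) = d := by
      funext i
      revert i
      intro i
      generalize d i = x
      revert x
      decide
    rw [hfun]
  calc M * M = P * Matrix.diagonal d * (Q * P) * Matrix.diagonal d * Q := by
        rw [hM]; noncomm_ring
    _ = P * (Matrix.diagonal d * Matrix.diagonal d) * Q := by rw [hQP]; noncomm_ring
    _ = M := by rw [hdd, hM]

theorem stmt_9 {n : ℕ} (hn : 2 ≤ n) :
    ¬ ∃ B C : Matrix (Fin 2 ⊕ Fin (n - 2)) (Fin 2 ⊕ Fin (n - 2)) (ZMod 2),
      IsDiagonalizable B ∧ IsDiagonalizable C ∧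
      Matrix.fromBlocks (!![1, 1; 1, 0]) 0 0 (1 : Matrix (Fin (n - 2)) (Fin (n - 2)) (ZMod 2))
        = B + C := by
  rintro ⟨B, C, hB, hC, hA⟩
  have hB2 := diag_idem hB
  have hC2 := diag_idem hC
  set A : Matrix (Fin 2 ⊕ Fin (n - 2)) (Fin 2 ⊕ Fin (n - 2)) (ZMod 2) :=
    Matrix.fromBlocks (!![1, 1; 1, 0]) 0 0 1 with hAdef
  set E : Matrix (Fin 2 ⊕ Fin (n - 2)) (Fin 2 ⊕ Fin (n - 2)) (ZMod 2) :=
    Matrix.fromBlocks 1 0 0 0 with hEdef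
  -- A*A + A = E
  have hK : (!![1, 1; 1, 0] : Matrix (Fin 2) (Fin 2) (ZMod 2)) * !![1, 1; 1, 0]
      + !![1, 1; 1, 0] = 1 := by decide
  have hE : A * A + A = E := by
    rw [hAdef, hEdef, Matrix.fromBlocks_multiply]
    simp only [Matrix.mul_zero, Matrix.zero_mul, add_zero, zero_add, mul_zero, zero_mul,
      Matrix.one_mul, Matrix.mul_one]
    rw [Matrix.fromBlocks_add, add_self_mat, hK, add_zero, add_zero]
  -- A*A + A = B*C + C*B
  have hS : A * A + A = B * C + C * B := by
    rw [hA]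
    have expand : (B + C) * (B + C) + (B + C)
        = (B * B + B) + (B * C + C * B) + (C * C + C) := by noncomm_ring
    rw [expand, hB2, hC2, add_self_mat, add_self_mat]
    simp
  have hBCE : B * C + C * B = E := by rw [← hS, hE]
  -- B * E + E * B = E
  have hBE : B * E + E * B = E := by
    rw [← hBCE]
    have expand : B * (B * C + C * B) + (B * C + C * B) * B
        = (B * B) * C + C * (B * B) + (B * C * B + B * C * B) := by noncomm_ring
    rw [expand, hB2, add_self_mat, add_zero]
  -- evaluate at (inl 0, inl 0)
  have h00 := congrFun (congrFun hBE (Sum.inl 0)) (Sum.inl 0)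
  simp [hEdef, Matrix.add_apply, Matrix.mul_apply, Fintype.sum_sum_type,
    Matrix.one_apply, Fin.sum_univ_two, CharTwo.add_self_eq_zero] at h00
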